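/- In any diagram, every interaction vertex joined by an edge to an interaction vertex of type {φbar,c,ψ} contains at least one half-edge labeled A. (Combinatorial content of Corollary 1: every branch arising from the vertex φbar c ψ necessarily passes through vertices containing an A-leg.) -/

import Mathlib

/-!  Feynman-diagram combinatorics of 4D topological Yang–Mills theory
in the (anti-)self-dual Landau gauges. -/

/-- The ten field labels. -/
inductive Fld : Type
  | A | psi | chibar | c | cbar | phi | phibar | etabar | B | b
  deriving DecidableEq

/-- The seven allowed interaction-vertex types (multisets of labels). -/
def vertexTypes : List (Multiset Fld) :=
  [ {Fld.B, Fld.A, Fld.A}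
  , {Fld.chibar, Fld.A, Fld.c}
  , {Fld.A, Fld.psi, Fld.chibar}
  , {Fld.A, Fld.cbar, Fld.c}
  , {Fld.A, Fld.phibar, Fld.phi}
  , {Fld.phibar, Fld.c, Fld.psi}
  , {Fld.chibar, Fld.c, Fld.A, Fld.A} ]

/-- The six allowed propagator types (unordered pairs of labels). -/
def propTypes : List (Multiset Fld) :=
  [ {Fld.c, Fld.cbar}
  , {Fld.chibar, Fld.psi}
  , {Fld.etabar, Fld.psi}
  , {Fld.phi, Fld.phibar}
  , {Fld.A, Fld.B}
  , {Fld.A, Fld.b} ]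

/-- A Feynman diagram: a finite set `H` of half-edges labelled by fields,
partitioned into vertices (the fibers of `vtx`), each vertex being an
interaction vertex of one of the seven allowed types or an external vertex
(a single half-edge), together with a perfect matching `mu` whose matched
pairs realize one of the six allowed propagator types. -/
structure Diagram where
  H : Type
  V : Type
  [fintypeH : Fintype H]
  [decEqH : DecidableEq H]
  [fintypeV : Fintype V]
  [decEqV : DecidableEq V]
  vtx : H → V
  vtx_surj : Function.Surjective vtx
  lab : H → Fld
  mu : H → H
  mu_invol : Function.Involutive mu
  mu_ne : ∀ h, mu h ≠ h
  prop_ok : ∀ h, ({lab h, lab (mu h)} : Multiset Fld) ∈ propTypes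
  vtx_ok : ∀ v : V,
      ((Finset.univ.filter (fun h => vtx h = v)).val.map lab) ∈ vertexTypes
      ∨ ∃ h, Finset.univ.filter (fun h' => vtx h' = v) = {h}

attribute [instance] Diagram.fintypeH Diagram.decEqH Diagram.fintypeV Diagram.decEqV

namespace Diagram

variable (D : Diagram)

/-- The set of half-edges belonging to a vertex. -/
def fiber (v : D.V) : Finset D.H := Finset.univ.filter (fun h => D.vtx h = v)

/-- The multiset of field labels carried by a vertex. -/
def labels (v : D.V) : Multiset Fld := (D.fiber v).val.map D.lab

/-- An external vertex: a single half-edge (an external leg). -/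
def IsExternal (v : D.V) : Prop := ∃ h, D.fiber v = {h}

/-- An interaction vertex: its labels form one of the seven allowed types. -/
def IsInteraction (v : D.V) : Prop := D.labels v ∈ vertexTypes

/-- Adjacency of the multigraph of the diagram. -/
def Adj (v w : D.V) : Prop := ∃ h, D.vtx h = v ∧ D.vtx (D.mu h) = w

/-- Connectedness of the multigraph of the diagram. -/
def Connected : Prop := ∀ v w : D.V, Relation.ReflTransGen D.Adj v w

/-- A cycle of the multigraph: a closed walk `e 0, e 1, …, e (n-1)` of
half-edges (each matched pair `{e i, mu (e i)}` being the traversed edge),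
of positive length, with pairwise distinct edges and pairwise distinct
vertices. -/
structure Cycle where
  n : ℕ
  npos : 0 < n
  e : ZMod n → D.H
  step : ∀ i, D.vtx (D.mu (e i)) = D.vtx (e (i + 1))
  edges_distinct : ∀ i j, i ≠ j → e i ≠ e j ∧ e i ≠ D.mu (e j)
  vtx_inj : Function.Injective fun i => D.vtx (e i)

/-- A loop diagram: the multigraph contains a cycle. -/
def IsLoopDiagram : Prop := Nonempty D.Cycle

end Diagram

instance : Fintype Fld :=
  Fintype.ofList [Fld.A, Fld.psi, Fld.chibar, Fld.c, Fld.cbar, Fld.phi, Fld.phibar, Fld.etabar,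
    Fld.B, Fld.b] (by intro x; cases x <;> simp)

lemma key_fld_fact : ∀ x y : Fld, x ∈ ({Fld.phibar, Fld.c, Fld.psi} : Multiset Fld) →
    ({x, y} : Multiset Fld) ∈ propTypes →
    ∀ s ∈ vertexTypes, y ∈ s → Fld.A ∈ s := by decide

/-- combinatorial content of Corollary 1. -/
theorem neighbours_of_phibar_c_psi_carry_A (D : Diagram) (h : D.H)
    (h1 : D.labels (D.vtx h) = {Fld.phibar, Fld.c, Fld.psi})
    (h2 : D.IsInteraction (D.vtx (D.mu h))) :
    Fld.A ∈ D.labels (D.vtx (D.mu h)) := by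
  have hmem : ∀ g : D.H, D.lab g ∈ D.labels (D.vtx g) := fun g =>
    Multiset.mem_map.2 ⟨g, by simp [Diagram.fiber], rfl⟩
  have hx : D.lab h ∈ ({Fld.phibar, Fld.c, Fld.psi} : Multiset Fld) := h1 ▸ hmem h
  exact key_fld_fact (D.lab h) (D.lab (D.mu h)) hx (D.prop_ok h)
    (D.labels (D.vtx (D.mu h))) h2 (hmem (D.mu h))
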